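/- There exists a planar flow graph whose stretching is nonplanar. Concretely: the flow graph on vertices {1,...,7} with edges 1→2, 2→3, 2→5, 2→6, 3→4, 4→5, 4→6, 5→7, 6→3, 6→5 is planar, but after splitting vertex 6 into 6_s (receiving edges from 2 and 4) and 6_t (emitting edges to 3 and 5) with an edge 6_s→6_t, the underlying undirected graph contains a subdivision of K_{3,3} and hence is nonplanar. -/

import Mathlib

/-- `H` contains a subdivision of `K`: there are branch vertices (an injection of the
vertices of `K`) and, for each edge of `K`, a path in `H` between the corresponding
branch vertices, such that the paths avoid branch vertices internally and are internally
disjoint from one another. -/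
def ContainsSubdivision {α β : Type} (K : SimpleGraph α) (H : SimpleGraph β) : Prop :=
  ∃ f : α ↪ β, ∃ P : ∀ a b, K.Adj a b → H.Walk (f a) (f b),
    (∀ a b (h : K.Adj a b), (P a b h).IsPath) ∧
    (∀ a b (h : K.Adj a b) (c : α), f c ∈ (P a b h).support → c = a ∨ c = b) ∧
    (∀ a b a' b' (h : K.Adj a b) (h' : K.Adj a' b'), s(a, b) ≠ s(a', b') →
      ∀ v, v ∈ (P a b h).support → v ∈ (P a' b' h').support →
        (v = f a ∨ v = f b) ∧ (v = f a' ∨ v = f b'))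

/-- Planarity, via Kuratowski's characterization: a finite graph is planar iff it
contains no subdivision of `K₅` or `K₃,₃`. -/
def KPlanar {β : Type} (H : SimpleGraph β) : Prop :=
  ¬ContainsSubdivision (⊤ : SimpleGraph (Fin 5)) H ∧
  ¬ContainsSubdivision (completeBipartiteGraph (Fin 3) (Fin 3)) H

/-- The underlying undirected graph of the flow graph on vertices `{1,…,7}` (0-indexed
here as `Fin 7`) with edges 1→2, 2→3, 2→5, 2→6, 3→4, 4→5, 4→6, 5→7, 6→3, 6→5. -/
def exampleGraph : SimpleGraph (Fin 7) :=
  SimpleGraph.fromRel (fun a b =>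
    (a, b) ∈ [((0 : Fin 7), (1 : Fin 7)), (1, 2), (1, 4), (1, 5), (2, 3), (3, 4), (3, 5),
      (4, 6), (5, 2), (5, 4)])

/-- The underlying undirected graph of its stretching: vertex 6 is split into `6ₛ`
(index 5, receiving the edges from 2 and 4) and `6ₜ` (index 7, emitting the edges to 3
and 5), with a new edge `6ₛ → 6ₜ`. -/
def exampleStretched : SimpleGraph (Fin 8) :=
  SimpleGraph.fromRel (fun a b =>
    (a, b) ∈ [((0 : Fin 8), (1 : Fin 8)), (1, 2), (1, 4), (1, 5), (2, 3), (3, 4), (3, 5),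
      (4, 6), (7, 2), (7, 4), (5, 7)])

/-- There is a planar flow graph whose stretching is nonplanar: the example graph is
planar, but its stretching contains a subdivision of `K₃,₃` and hence is nonplanar. -/
instance : DecidableRel exampleGraph.Adj := fun a b =>
  decidable_of_iff _ (SimpleGraph.fromRel_adj _ a b).symm

lemma subdiv_neighbors {α β : Type} {K : SimpleGraph α} {H : SimpleGraph β}
    (h : ContainsSubdivision K H) :
    ∃ g : α → β, Function.Injective g ∧
      ∀ a, ∃ n : α → β, (∀ b, K.Adj a b → H.Adj (g a) (n b)) ∧
        ∀ b c, K.Adj a b → K.Adj a c → n b = n c → b = c := by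
  classical
  obtain ⟨f, P, hpath, hbranch, hdisj⟩ := h
  refine ⟨f, f.injective, fun a => ?_⟩
  have hadj : ∀ b (hb : K.Adj a b), H.Adj (f a) ((P a b hb).getVert 1) := by
    intro b hb
    have hlen : 0 < (P a b hb).length := by
      rcases Nat.eq_zero_or_pos (P a b hb).length with h0 | h0
      · exact absurd (f.injective ((P a b hb).eq_of_length_eq_zero h0)) hb.ne
      · exact h0
    have := (P a b hb).adj_getVert_succ hlen
    rwa [SimpleGraph.Walk.getVert_zero] at this
  have hmem : ∀ b (hb : K.Adj a b), (P a b hb).getVert 1 ∈ (P a b hb).support := by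
    intro b hb
    rw [SimpleGraph.Walk.mem_support_iff_exists_getVert]
    refine ⟨1, rfl, ?_⟩
    have hlen : 0 < (P a b hb).length := by
      rcases Nat.eq_zero_or_pos (P a b hb).length with h0 | h0
      · exact absurd (f.injective ((P a b hb).eq_of_length_eq_zero h0)) hb.ne
      · exact h0
    omega
  refine ⟨fun b => if hb : K.Adj a b then (P a b hb).getVert 1 else f a,
    fun b hb => by simpa [dif_pos hb] using hadj b hb, ?_⟩
  intro b c hb hc hn
  by_contra hbc
  simp only [dif_pos hb, dif_pos hc] at hn
  have hne : s(a, b) ≠ s(a, c) := by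
    intro heq
    rcases Sym2.eq_iff.mp heq with ⟨_, h2⟩ | ⟨h1, _⟩
    · exact hbc h2
    · exact hc.ne h1
  have h1 := hdisj a b a c hb hc hne _ (hmem b hb) (by rw [hn]; exact hmem c hc)
  have hva : (P a b hb).getVert 1 ≠ f a := fun h => H.irrefl (h ▸ hadj b hb)
  rcases h1.1 with h2 | h2
  · exact hva h2
  rcases h1.2 with h3 | h3
  · exact hva h3
  exact hbc (f.injective (h2 ▸ h3))

lemma subdiv_card {α β : Type} [Fintype α] [DecidableEq α] [DecidableEq β]
    {K : SimpleGraph α} [DecidableRel K.Adj] {H : SimpleGraph β} [DecidableRel H.Adj]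
    [Fintype β] (h : ContainsSubdivision K H) (T : Finset β) (d : ℕ)
    (hdeg : ∀ v : β, d ≤ H.degree v → v ∈ T)
    (hK : ∀ a : α, d ≤ (Finset.univ.filter (K.Adj a)).card) :
    Fintype.card α ≤ T.card := by
  obtain ⟨g, hg, hn⟩ := subdiv_neighbors h
  have hmem : ∀ a, g a ∈ T := by
    intro a
    obtain ⟨n, hnadj, hninj⟩ := hn a
    apply hdeg
    calc d ≤ (Finset.univ.filter (K.Adj a)).card := hK a
      _ ≤ (H.neighborFinset (g a)).card := by
          apply Finset.card_le_card_of_injOn n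
          · intro b hb
            rw [Finset.mem_coe, SimpleGraph.mem_neighborFinset]
            exact hnadj b (Finset.mem_filter.mp hb).2
          · intro b hb c hc hbc
            exact hninj b c (Finset.mem_filter.mp hb).2 (Finset.mem_filter.mp hc).2 hbc
      _ = H.degree (g a) := rfl
  calc Fintype.card α = (Finset.univ : Finset α).card := rfl
    _ ≤ T.card := Finset.card_le_card_of_injOn g (fun a _ => hmem a) (hg.injOn)

lemma noK5 : ¬ContainsSubdivision (⊤ : SimpleGraph (Fin 5)) exampleGraph := by
  intro h
  have := subdiv_card h ({1, 4, 5} : Finset (Fin 7)) 4 (by decide) (by decide)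
  simp at this

instance : DecidableRel (completeBipartiteGraph (Fin 3) (Fin 3)).Adj := fun a b =>
  inferInstanceAs (Decidable (_ ∨ _))

lemma noK33 : ¬ContainsSubdivision (completeBipartiteGraph (Fin 3) (Fin 3)) exampleGraph := by
  intro h
  have := subdiv_card h ({1, 2, 3, 4, 5} : Finset (Fin 7)) 3 (by decide) (by decide)
  simp at this

instance : DecidableRel exampleStretched.Adj := fun a b =>
  decidable_of_iff _ (SimpleGraph.fromRel_adj _ a b).symm

def fmap : Fin 3 ⊕ Fin 3 → Fin 8 := Sum.elim ![1, 3, 7] ![2, 4, 5]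

lemma fmap_inj : Function.Injective fmap := by decide

lemma fmap_adj : ∀ a b, (completeBipartiteGraph (Fin 3) (Fin 3)).Adj a b →
    exampleStretched.Adj (fmap a) (fmap b) := by decide

lemma posK33 : ContainsSubdivision (completeBipartiteGraph (Fin 3) (Fin 3)) exampleStretched := by
  refine ⟨⟨fmap, fmap_inj⟩, fun a b h => (fmap_adj a b h).toWalk, ?_, ?_, ?_⟩
  · intro a b h
    rw [SimpleGraph.Walk.cons_isPath_iff]
    exact ⟨SimpleGraph.Walk.IsPath.nil, by simp [(fmap_adj a b h).ne]⟩
  · intro a b h c hc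
    simp only [SimpleGraph.Walk.support_cons, SimpleGraph.Walk.support_nil,
      List.mem_cons, List.mem_singleton] at hc
    rcases hc with hc | hc | hc
    · exact Or.inl (fmap_inj hc)
    · exact Or.inr (fmap_inj hc)
    · exact absurd hc List.not_mem_nil
  · intro a b a' b' h h' hne v hv hv'
    simp only [SimpleGraph.Walk.support_cons, SimpleGraph.Walk.support_nil,
      List.mem_cons, List.mem_singleton, List.not_mem_nil, or_false] at hv hv'
    exact ⟨hv, hv'⟩

theorem stmt14 :
    KPlanar exampleGraph ∧
    ContainsSubdivision (completeBipartiteGraph (Fin 3) (Fin 3)) exampleStretched ∧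
    ¬KPlanar exampleStretched := by
  exact ⟨⟨noK5, noK33⟩, posK33, fun hp => hp.2 posK33⟩
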